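/- Let c(ω,x) be a randomized classifier that, for every ω and x, selects an index maximizing g_j(ω,x) over j ∈ [K], where each g_j(ω,·) approximates η̃_j(·) = 1/(1+a) + ((a−1)/(a+1)) · η_j(·) with pointwise error Δ(ω,x) = max_{j∈[K]} |g_j(ω,x) − η̃_j(x)|. Then the excess risk satisfies R − R* ≤ ∫ E_ω[ 2Δ_ε(ω,x) · 1(η*(x) − η_s(x) ≤ 2Δ_ε(ω,x)) ] f(x) dx, where Δ_ε(ω,x) = ((a+1)/(a−1)) · Δ(ω,x), η*(x) = max_j η_j(x), and η_s(x) = max_{j ≠ c*(x)} η_j(x) is the second largest conditional class probability. -/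

import Mathlib

open MeasureTheory

/-- excess risk bound for the vector approximation method (Theorem 2 of
the paper). If the randomized classifier `c(ω,x)` maximizes `g_j(ω,x)` over `j`, where
`g_j` approximates `η̃_j = 1/(1+a) + ((a−1)/(a+1)) η_j` with pointwise error
`Δ(ω,x) = max_j |g_j(ω,x) − η̃_j(x)|`, then
`R − R* ≤ ∫ E_ω[2Δ_ε(ω,x) 1(η*(x) − η_s(x) ≤ 2Δ_ε(ω,x))] f(x) dx` with
`Δ_ε = ((a+1)/(a−1)) Δ`. -/
theorem excess_risk_bound_vector_approximation (K d : ℕ) (hK : 2 ≤ K) (hd : 1 ≤ d)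
    (ε : ℝ) (hε : 0 < ε) (a : ℝ) (ha : a = Real.exp (ε / 2))
    -- the density of the feature vector
    (f : (Fin d → ℝ) → ℝ) (hf0 : ∀ x, 0 ≤ f x) (hfmeas : Measurable f)
    (hfint : Integrable f) (hf1 : ∫ x, f x = 1)
    -- conditional class probabilities
    (η : Fin K → (Fin d → ℝ) → ℝ) (hηmeas : ∀ j, Measurable (η j))
    (hη0 : ∀ j x, 0 ≤ η j x) (hη1 : ∀ j x, η j x ≤ 1)
    (hηsum : ∀ x, ∑ j, η j x = 1)
    -- the Bayes classifier: the unique maximizer of `j ↦ η_j(x)` for every `x`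
    (cstar : (Fin d → ℝ) → Fin K) (hcstar_meas : Measurable cstar)
    (hcstar : ∀ x, ∀ j, j ≠ cstar x → η j x < η (cstar x) x)
    (ηstar : (Fin d → ℝ) → ℝ) (hηstar : ∀ x, ηstar x = η (cstar x) x)
    -- the second largest conditional class probability
    (ηs : (Fin d → ℝ) → ℝ) (hηs_meas : Measurable ηs)
    (hηs_ub : ∀ x, ∀ j, j ≠ cstar x → η j x ≤ ηs x)
    (hηs_mem : ∀ x, ∃ j, j ≠ cstar x ∧ η j x = ηs x)
    -- the privatized regression functions
    (ηt : Fin K → (Fin d → ℝ) → ℝ)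
    (hηt : ∀ j x, ηt j x = 1 / (1 + a) + ((a - 1) / (a + 1)) * η j x)
    -- the randomized model outputs and classifier
    (Ω : Type*) [MeasurableSpace Ω] (P : Measure Ω) [IsProbabilityMeasure P]
    (g : Fin K → Ω × (Fin d → ℝ) → ℝ) (hgmeas : ∀ j, Measurable (g j))
    (c : Ω × (Fin d → ℝ) → Fin K) (hc_meas : Measurable c)
    (hc_max : ∀ p : Ω × (Fin d → ℝ), ∀ j, g j p ≤ g (c p) p)
    -- the pointwise approximation error `Δ(ω,x) = max_j |g_j(ω,x) − η̃_j(x)|`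
    (Δ : Ω × (Fin d → ℝ) → ℝ) (hΔmeas : Measurable Δ)
    (hΔ_ub : ∀ p : Ω × (Fin d → ℝ), ∀ j, |g j p - ηt j p.2| ≤ Δ p)
    (hΔ_mem : ∀ p : Ω × (Fin d → ℝ), ∃ j, |g j p - ηt j p.2| = Δ p)
    -- the risk of `c` and the Bayes risk
    (R Rstar : ℝ)
    (hR : R = ∫ ω, (∫ x, (1 - η (c (ω, x)) x) * f x) ∂P)
    (hRstar : Rstar = ∫ x, (1 - ηstar x) * f x)
    -- integrability assumptions making both sides well defined
    (hint1 : Integrable (fun p : Ω × (Fin d → ℝ) => η (c p) p.2 * f p.2) (P.prod volume))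
    (hint2 : Integrable (fun p : Ω × (Fin d → ℝ) =>
      (2 * (((a + 1) / (a - 1)) * Δ p) *
        (if ηstar p.2 - ηs p.2 ≤ 2 * (((a + 1) / (a - 1)) * Δ p) then 1 else 0)) * f p.2)
      (P.prod volume)) :
    R - Rstar ≤ ∫ x, (∫ ω, 2 * (((a + 1) / (a - 1)) * Δ (ω, x)) *
      (if ηstar x - ηs x ≤ 2 * (((a + 1) / (a - 1)) * Δ (ω, x)) then 1 else 0) ∂P)
        * f x := by
  have ha1 : 1 < a := by
    rw [ha]
    nlinarith [Real.add_one_le_exp (ε/2), hε]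
  have ham : (0:ℝ) < a - 1 := by linarith
  have hap : (0:ℝ) < a + 1 := by linarith
  have hb : (0:ℝ) < (a-1)/(a+1) := by positivity
  have hΔnn : ∀ p, 0 ≤ Δ p := fun p => le_trans (abs_nonneg _) (hΔ_ub p (c p))
  set Δε : Ω × (Fin d → ℝ) → ℝ := fun p => ((a+1)/(a-1)) * Δ p with hΔε
  set B : Ω × (Fin d → ℝ) → ℝ := fun p =>
    (2 * (((a + 1) / (a - 1)) * Δ p) *
      (if ηstar p.2 - ηs p.2 ≤ 2 * (((a + 1) / (a - 1)) * Δ p) then 1 else 0)) * f p.2 with hB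
  -- key pointwise inequality
  have key : ∀ p : Ω × (Fin d → ℝ), (ηstar p.2 - η (c p) p.2) * f p.2 ≤ B p := by
    intro p
    have hcoef : (0:ℝ) ≤ (a+1)/(a-1) := le_of_lt (by positivity)
    have hΔεnn : 0 ≤ ((a+1)/(a-1)) * Δ p := mul_nonneg hcoef (hΔnn p)
    by_cases hcp : c p = cstar p.2
    · have h0 : ηstar p.2 - η (c p) p.2 = 0 := by rw [hcp, hηstar]; ring
      rw [h0, zero_mul, hB]
      apply mul_nonneg (mul_nonneg (by linarith) _) (hf0 _)
      split <;> norm_num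
    · have h1 : g (cstar p.2) p ≤ g (c p) p := hc_max p _
      have h2 := abs_le.1 (hΔ_ub p (cstar p.2))
      have h3 := abs_le.1 (hΔ_ub p (c p))
      have h4 : ((a-1)/(a+1)) * (η (cstar p.2) p.2 - η (c p) p.2) ≤ 2 * Δ p := by
        have h5 : ηt (cstar p.2) p.2 - ηt (c p) p.2
            = ((a-1)/(a+1)) * (η (cstar p.2) p.2 - η (c p) p.2) := by
          rw [hηt, hηt]; ring
        rw [← h5]
        linarith [h2.1, h2.2, h3.1, h3.2]
      have h6 : η (cstar p.2) p.2 - η (c p) p.2 ≤ 2 * (((a+1)/(a-1)) * Δ p) := by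
        have hX := (le_div_iff₀' hb).2 h4
        have hinv : 2 * Δ p / ((a-1)/(a+1)) = 2 * (((a+1)/(a-1)) * Δ p) := by
          field_simp
        rw [hinv] at hX; exact hX
      have h7 : ηstar p.2 - ηs p.2 ≤ 2 * (((a+1)/(a-1)) * Δ p) := by
        have := hηs_ub p.2 (c p) hcp
        rw [hηstar]; linarith
      rw [hB]
      simp only [if_pos h7, mul_one]
      apply mul_le_mul_of_nonneg_right _ (hf0 _)
      rw [hηstar]; exact h6
  -- measurability of ηstar
  have hηstar_meas : Measurable ηstar := by
    have heq : ηstar = fun x => ∑ j : Fin K, if cstar x = j then η j x else 0 := by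
      funext x
      rw [hηstar, Finset.sum_ite_eq Finset.univ (cstar x) (fun j => η j x)]
      simp
    rw [heq]
    exact Finset.measurable_sum _ fun j _ =>
      Measurable.ite (hcstar_meas (measurableSet_singleton j)) (hηmeas j) measurable_const
  -- integrability of ηstar * f
  have I1 : Integrable (fun x => ηstar x * f x) := by
    apply Integrable.mono hfint ((hηstar_meas.mul hfmeas).aestronglyMeasurable)
    filter_upwards with x
    simp only [Real.norm_eq_abs, Pi.mul_apply]
    rw [abs_mul, abs_of_nonneg (hf0 x)]
    have h0 : 0 ≤ ηstar x := by rw [hηstar]; exact hη0 _ _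
    have h1 : ηstar x ≤ 1 := by rw [hηstar]; exact hη1 _ _
    calc |ηstar x| * f x ≤ 1 * f x := by
            apply mul_le_mul_of_nonneg_right _ (hf0 x)
            rw [abs_of_nonneg h0]; exact h1
      _ = f x := one_mul _
  -- integrability of p ↦ ηstar p.2 * f p.2 on the product
  have I2 : Integrable (fun p : Ω × (Fin d → ℝ) => ηstar p.2 * f p.2) (P.prod volume) := by
    have hm : Measurable (fun p : Ω × (Fin d → ℝ) => ηstar p.2 * f p.2) :=
      (hηstar_meas.comp measurable_snd).mul (hfmeas.comp measurable_snd)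
    rw [integrable_prod_iff hm.aestronglyMeasurable]
    refine ⟨Filter.Eventually.of_forall (fun ω => I1), ?_⟩
    have hconst : Integrable (fun _ : Ω => ∫ y, ‖ηstar y * f y‖) P := integrable_const _
    simpa using hconst
  -- rewrite Rstar
  have hRstar' : Rstar = 1 - ∫ x, ηstar x * f x := by
    rw [hRstar]
    have h : (fun x => (1 - ηstar x) * f x) = fun x => f x - ηstar x * f x := by
      funext x; ring
    rw [h, integral_sub hfint I1, hf1]
  -- rewrite R
  have hR' : R = 1 - ∫ p, η (c p) p.2 * f p.2 ∂(P.prod volume) := by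
    have hae : ∀ᵐ ω ∂P, (∫ x, (1 - η (c (ω, x)) x) * f x) = 1 - ∫ x, η (c (ω, x)) x * f x := by
      filter_upwards [hint1.prod_right_ae] with ω hω
      have h : (fun x => (1 - η (c (ω, x)) x) * f x) = fun x => f x - η (c (ω, x)) x * f x := by
        funext x; ring
      rw [h, integral_sub hfint hω, hf1]
    rw [hR, integral_congr_ae hae,
      integral_sub (integrable_const 1) hint1.integral_prod_left,
      integral_const, probReal_univ, one_smul,
      ← integral_prod _ hint1]
  -- express the excess risk as a product integral
  have step : R - Rstar = ∫ p, (ηstar p.2 - η (c p) p.2) * f p.2 ∂(P.prod volume) := by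
    have h2 : ∫ x, ηstar x * f x = ∫ p, ηstar p.2 * f p.2 ∂(P.prod volume) := by
      rw [integral_prod _ I2]
      simp only []
      rw [integral_const, probReal_univ, one_smul]
    have h3 : ∫ p, (ηstar p.2 - η (c p) p.2) * f p.2 ∂(P.prod volume)
        = ∫ p, (ηstar p.2 * f p.2 - η (c p) p.2 * f p.2) ∂(P.prod volume) := by
      congr 1; funext p; ring
    rw [hR', hRstar', h2, h3, integral_sub I2 hint1]
    ring
  have Isub : Integrable (fun p : Ω × (Fin d → ℝ) => (ηstar p.2 - η (c p) p.2) * f p.2)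
      (P.prod volume) :=
    (I2.sub hint1).congr (Filter.Eventually.of_forall fun p => by
      simp only [Pi.sub_apply]; ring)
  have step2 : R - Rstar ≤ ∫ p, B p ∂(P.prod volume) := by
    rw [step]; exact integral_mono Isub hint2 key
  have hint2' : Integrable (Function.uncurry fun ω x => B (ω, x)) (P.prod volume) :=
    hint2.congr (Filter.Eventually.of_forall fun p => by simp [Function.uncurry, hB])
  calc R - Rstar ≤ ∫ p, B p ∂(P.prod volume) := step2
    _ = ∫ ω, (∫ x, B (ω, x)) ∂P := integral_prod _ hint2
    _ = ∫ x, (∫ ω, B (ω, x) ∂P) := integral_integral_swap hint2'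
    _ = ∫ x, (∫ ω, 2 * (((a + 1) / (a - 1)) * Δ (ω, x)) *
          (if ηstar x - ηs x ≤ 2 * (((a + 1) / (a - 1)) * Δ (ω, x)) then 1 else 0) ∂P)
            * f x := by
        congr 1; funext x
        simp only [hB]
        rw [integral_mul_const]
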